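/- If a finite directed multigraph with integer-weighted edges has every vertex with in-degree equal to out-degree, and the total weight of all edges is negative, then the graph contains a directed cycle of negative total weight. -/

import Mathlib

/-- A list of weighted directed edges (source, target, weight) forms a directed
cycle: nonempty, consecutive edges chain, and the walk closes up. -/
def IsDirCycle {V : Type*} (l : List (V × V × ℤ)) : Prop :=
  l ≠ [] ∧ l.Chain' (fun e f => e.2.1 = f.1) ∧
    l.getLast?.map (fun e => e.2.1) = l.head?.map (fun e => e.1)

/-- Every vertex has in-degree equal to out-degree in the edge multiset `E`. -/
def DegBalanced {V : Type*} [DecidableEq V] (E : Multiset (V × V × ℤ)) : Prop :=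
  ∀ v : V, (E.filter fun e => e.1 = v).card = (E.filter fun e => e.2.1 = v).card

/-- Total weight of an edge multiset. -/
def wsum {V : Type*} (E : Multiset (V × V × ℤ)) : ℤ := (E.map fun e => e.2.2).sum

lemma aux_path {V : Type*} [DecidableEq V] :
    ∀ (n : ℕ) (E : Multiset (V × V × ℤ)), E.card = n → ∀ (s c : V) (w : ℤ),
    (∀ v, (E.filter fun e => e.1 = v).card + (if v = s then 1 else 0)
        = (E.filter fun e => e.2.1 = v).card + (if v = c then 1 else 0)) →
    ∃ l : List (V × V × ℤ), (l : Multiset (V × V × ℤ)) ≤ E ∧ IsDirCycle ((s, c, w) :: l) := by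
  intro n
  induction n using Nat.strong_induction_on with
  | _ n ih =>
    intro E hcard s c w hbal
    by_cases hcs : c = s
    · refine ⟨[], by simp, ?_⟩
      subst hcs
      exact ⟨by simp, List.isChain_singleton _, by simp⟩
    · have h1 := hbal c
      simp [hcs] at h1
      have hfne : E.filter (fun e => e.1 = c) ≠ 0 := by
        intro h; rw [h] at h1; simp at h1
      obtain ⟨f, hf⟩ := Multiset.exists_mem_of_ne_zero hfne
      rw [Multiset.mem_filter] at hf
      obtain ⟨hfE, hfc⟩ := hf
      obtain ⟨a, b, wt⟩ := f
      simp only at hfc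
      subst hfc
      have hE : (a, b, wt) ::ₘ E.erase (a, b, wt) = E := Multiset.cons_erase hfE
      have hcard' : (E.erase (a, b, wt)).card < n := by
        rw [← hcard, ← hE]; simp
      have hbal' : ∀ v, ((E.erase (a, b, wt)).filter fun e => e.1 = v).card + (if v = s then 1 else 0)
          = ((E.erase (a, b, wt)).filter fun e => e.2.1 = v).card + (if v = b then 1 else 0) := by
        intro v
        have hb := hbal v
        rw [← hE, Multiset.filter_cons, Multiset.filter_cons] at hb
        simp only [Multiset.card_add, apply_ite Multiset.card, Multiset.card_singleton,
          Multiset.card_zero] at hb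
        split_ifs at hb ⊢ <;> subst_vars <;> first | omega | simp_all
      obtain ⟨l', hle', hne', hch', hcl'⟩ := ih _ hcard' (E.erase (a, b, wt)) rfl s b w hbal'
      refine ⟨(a, b, wt) :: l', ?_, ?_, ?_, ?_⟩
      · rw [← hE]
        exact Multiset.cons_le_cons _ hle'
      · simp
      · rw [List.Chain', List.isChain_cons_cons]
        refine ⟨rfl, ?_⟩
        rw [List.Chain'] at hch'; rw [List.isChain_cons] at hch' ⊢
        exact hch'
      · cases l' with
        | nil => simpa using hcl'
        | cons x t =>
          rw [List.getLast?_cons_cons, List.getLast?_cons_cons]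
          rw [List.getLast?_cons_cons] at hcl'
          simpa using hcl'

lemma chain_src_tgt {V : Type*} :
    ∀ (l : List (V × V × ℤ)) (hne : l ≠ []), l.Chain' (fun e f => e.2.1 = f.1) →
      l.map (fun e => e.1) ++ [(l.getLast hne).2.1] = (l.head hne).1 :: l.map (fun e => e.2.1) := by
  intro l
  induction l with
  | nil => simp
  | cons e t iht =>
    intro _ hch
    cases t with
    | nil => simp
    | cons f t' =>
      rw [List.Chain', List.isChain_cons_cons] at hch
      have := iht (by simp) hch.2
      simp only [List.map_cons, List.cons_append, List.head_cons]
      rw [List.getLast_cons (by simp)]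
      simp only [List.map_cons, List.cons_append, List.head_cons] at this
      rw [this]
      simp [hch.1]

lemma cycle_srcs_eq_tgts {V : Type*} (l : List (V × V × ℤ)) (h : IsDirCycle l) :
    (↑(l.map fun e => e.1) : Multiset V) = ↑(l.map fun e => e.2.1) := by
  obtain ⟨hne, hch, hcl⟩ := h
  have key := chain_src_tgt l hne hch
  have hlast : (l.getLast hne).2.1 = (l.head hne).1 := by
    rw [List.getLast?_eq_getLast hne, List.head?_eq_head hne] at hcl
    simpa using hcl
  have : (↑(l.map fun e => e.1) : Multiset V) + {(l.getLast hne).2.1}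
      = {(l.head hne).1} + ↑(l.map fun e => e.2.1) := by
    have h : ((l.map (fun e => e.1) : List V) : Multiset V) + ↑[(l.getLast hne).2.1]
        = ↑[(l.head hne).1] + ↑(l.map fun e => e.2.1) := by
      rw [Multiset.coe_add, Multiset.coe_add, key, List.singleton_append]
    simpa using h
  rw [hlast] at this
  have := this.trans (add_comm _ _)
  exact add_right_cancel this

lemma cycle_balanced {V : Type*} [DecidableEq V] (l : List (V × V × ℤ)) (h : IsDirCycle l) :
    ∀ v, ((l : Multiset (V × V × ℤ)).filter fun e => e.1 = v).card
       = ((l : Multiset (V × V × ℤ)).filter fun e => e.2.1 = v).card := by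
  intro v
  have h1 : ((l : Multiset (V × V × ℤ)).filter fun e => e.1 = v).card
      = ((l : Multiset (V × V × ℤ)).map fun e => e.1).count v := by
    rw [Multiset.count_map]
    congr 1
    exact Multiset.filter_congr (by intro e _; constructor <;> exact Eq.symm)
  have h2 : ((l : Multiset (V × V × ℤ)).filter fun e => e.2.1 = v).card
      = ((l : Multiset (V × V × ℤ)).map fun e => e.2.1).count v := by
    rw [Multiset.count_map]
    congr 1
    exact Multiset.filter_congr (by intro e _; constructor <;> exact Eq.symm)
  rw [h1, h2]
  congr 1
  exact cycle_srcs_eq_tgts l h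

lemma main_aux {V : Type*} [DecidableEq V] : ∀ (n : ℕ) (E : Multiset (V × V × ℤ)),
    E.card = n → DegBalanced E → wsum E < 0 →
    ∃ l : List (V × V × ℤ), IsDirCycle l ∧ (l : Multiset (V × V × ℤ)) ≤ E ∧
      (l.map fun e => e.2.2).sum < 0 := by
  intro n
  induction n using Nat.strong_induction_on with
  | _ n ih =>
    intro E hcard hbal hneg
    have hEne : E ≠ 0 := by rintro rfl; simp [wsum] at hneg
    obtain ⟨e, heE⟩ := Multiset.exists_mem_of_ne_zero hEne
    obtain ⟨a, b, wt⟩ := e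
    have hE : (a, b, wt) ::ₘ E.erase (a, b, wt) = E := Multiset.cons_erase heE
    have hbal' : ∀ v, ((E.erase (a, b, wt)).filter fun e => e.1 = v).card + (if v = a then 1 else 0)
        = ((E.erase (a, b, wt)).filter fun e => e.2.1 = v).card + (if v = b then 1 else 0) := by
      intro v
      have hb := hbal v
      rw [← hE, Multiset.filter_cons, Multiset.filter_cons] at hb
      simp only [Multiset.card_add, apply_ite Multiset.card, Multiset.card_singleton,
        Multiset.card_zero] at hb
      split_ifs at hb ⊢ <;> subst_vars <;> first | omega | simp_all
    obtain ⟨l', hle', hcyc⟩ := aux_path (E.erase (a, b, wt)).card (E.erase (a, b, wt)) rfl a b wt hbal'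
    set L : List (V × V × ℤ) := (a, b, wt) :: l' with hL
    have hLle : (L : Multiset (V × V × ℤ)) ≤ E := by
      rw [← hE, hL]
      exact Multiset.cons_le_cons _ hle'
    by_cases hw : (L.map fun e => e.2.2).sum < 0
    · exact ⟨L, hcyc, hLle, hw⟩
    · push_neg at hw
      set M : Multiset (V × V × ℤ) := (L : Multiset (V × V × ℤ)) with hM
      have hsub : E - M + M = E := tsub_add_cancel_of_le hLle
      have hbal2 : DegBalanced (E - M) := by
        intro v
        have h3 := cycle_balanced L hcyc v
        rw [← hM] at h3
        have h4 := hbal v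
        have h5 : (M.filter fun e => e.1 = v).card
            ≤ (E.filter fun e => e.1 = v).card :=
          Multiset.card_le_card (Multiset.filter_le_filter _ hLle)
        have h6 : (M.filter fun e => e.2.1 = v).card
            ≤ (E.filter fun e => e.2.1 = v).card :=
          Multiset.card_le_card (Multiset.filter_le_filter _ hLle)
        rw [Multiset.filter_sub, Multiset.filter_sub,
          Multiset.card_sub (Multiset.filter_le_filter _ hLle),
          Multiset.card_sub (Multiset.filter_le_filter _ hLle)]
        omega
      have hw2 : wsum (E - M) < 0 := by
        have h7 : wsum E = wsum (E - M) + wsum M := by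
          conv_lhs => rw [← hsub]
          simp [wsum]
        have h8 : wsum M = (L.map fun e => e.2.2).sum := by
          simp [wsum, hM]
        rw [h7, h8] at hneg
        linarith
      have hcard2 : (E - M).card < n := by
        have h9 := congrArg Multiset.card hsub
        rw [Multiset.card_add] at h9
        have : M.card = L.length := by simp [hM]
        rw [← hcard]
        simp only [hL, List.length_cons] at this
        omega
      obtain ⟨l2, hc2, hle2, hw2'⟩ := ih _ hcard2 (E - M) rfl hbal2 hw2
      exact ⟨l2, hc2, le_trans hle2 (Multiset.sub_le_self _ _), hw2'⟩

theorem balanced_neg_total_weight_has_neg_cycle {V : Type*} [Fintype V] [DecidableEq V]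
    (E : Multiset (V × V × ℤ)) (hbal : DegBalanced E) (hneg : wsum E < 0) :
    ∃ l : List (V × V × ℤ), IsDirCycle l ∧ (l : Multiset (V × V × ℤ)) ≤ E ∧
      (l.map fun e => e.2.2).sum < 0 :=
  main_aux E.card E rfl hbal hneg
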